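/- Let c₃, C₃ > 0 and suppose g : [κ₀, K] → ℝ satisfies g''(κ) ≥ c₃ − C₃⟨z(κ)⟩^{-1-ε} where g = |z|², ε > 0, and suppose |z(κ₀)|^{1+ε} ≥ 2C₃/c₃ and g'(κ₀) > 0. Then |z(κ)|^{1+ε} ≥ 2C₃/c₃ for all κ ∈ [κ₀, K], and consequently g''(κ) ≥ c₃/2 on [κ₀, K]. -/

import Mathlib

open Set

/-- Bootstrap step: if `g = ‖z‖²` satisfies `g'' ≥ c₃ − C₃⟨z⟩^{-1-ε}`,
`‖z κ₀‖^{1+ε} ≥ 2C₃/c₃` and `g'(κ₀) > 0`, then `‖z κ‖^{1+ε} ≥ 2C₃/c₃` on `[κ₀,K]`,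
and consequently `g'' ≥ c₃/2` there. -/
theorem stmt_5 (d : ℕ) (κ₀ K c₃ C₃ ε : ℝ) (hκ : κ₀ ≤ K)
    (hc : 0 < c₃) (hC : 0 < C₃) (hε : 0 < ε)
    (z : ℝ → EuclideanSpace ℝ (Fin d)) (g g' g'' : ℝ → ℝ)
    (hz : ContDiff ℝ 2 z)
    (hg : ∀ κ ∈ Icc κ₀ K, g κ = ‖z κ‖^2)
    (hderiv1 : ∀ κ ∈ Icc κ₀ K, HasDerivAt g (g' κ) κ)
    (hderiv2 : ∀ κ ∈ Icc κ₀ K, HasDerivAt g' (g'' κ) κ)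
    (hlow : ∀ κ ∈ Icc κ₀ K,
      c₃ - C₃ * (Real.sqrt (1 + ‖z κ‖^2)) ^ (-(1 + ε)) ≤ g'' κ)
    (hbig : 2 * C₃ / c₃ ≤ ‖z κ₀‖ ^ (1 + ε))
    (hinit : 0 < g' κ₀) :
    ∀ κ ∈ Icc κ₀ K,
      2 * C₃ / c₃ ≤ ‖z κ‖ ^ (1 + ε) ∧ c₃ / 2 ≤ g'' κ := by
  have hz0 : 0 < ‖z κ₀‖ := by
    rcases eq_or_lt_of_le (norm_nonneg (z κ₀)) with h | h
    · exfalso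
      rw [← h, Real.zero_rpow (by positivity)] at hbig
      have : 0 < 2 * C₃ / c₃ := by positivity
      linarith
    · exact h
  have key : ∀ κ ∈ Icc κ₀ K, ‖z κ₀‖ ≤ ‖z κ‖ →
      2 * C₃ / c₃ ≤ ‖z κ‖ ^ (1 + ε) ∧ c₃ / 2 ≤ g'' κ := by
    intro κ hκ' h
    have hb : 2 * C₃ / c₃ ≤ ‖z κ‖ ^ (1 + ε) :=
      hbig.trans (Real.rpow_le_rpow (norm_nonneg _) h (by positivity))
    refine ⟨hb, ?_⟩
    set s := Real.sqrt (1 + ‖z κ‖ ^ 2) with hs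
    have hsz : ‖z κ‖ ≤ s := by
      rw [hs]
      calc ‖z κ‖ = Real.sqrt (‖z κ‖ ^ 2) := (Real.sqrt_sq (norm_nonneg _)).symm
        _ ≤ _ := Real.sqrt_le_sqrt (by linarith)
    have hspos : 0 < s := lt_of_lt_of_le (hz0.trans_le h) hsz
    have h1 : 2 * C₃ / c₃ ≤ s ^ (1 + ε) :=
      hb.trans (Real.rpow_le_rpow (norm_nonneg _) hsz (by positivity))
    have h2 : s ^ (-(1 + ε)) ≤ c₃ / (2 * C₃) := by
      rw [Real.rpow_neg hspos.le]
      have hpos : 0 < 2 * C₃ / c₃ := by positivity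
      calc (s ^ (1 + ε))⁻¹ ≤ (2 * C₃ / c₃)⁻¹ := inv_anti₀ hpos h1
        _ = c₃ / (2 * C₃) := by field_simp
    have hl := hlow κ hκ'
    have h3 : C₃ * s ^ (-(1 + ε)) ≤ c₃ / 2 := by
      calc C₃ * s ^ (-(1 + ε)) ≤ C₃ * (c₃ / (2 * C₃)) :=
            mul_le_mul_of_nonneg_left h2 hC.le
        _ = c₃ / 2 := by field_simp
    linarith
  have contg : ContinuousOn g (Icc κ₀ K) := fun x hx =>
    (hderiv1 x hx).continuousAt.continuousWithinAt
  have contg' : ContinuousOn g' (Icc κ₀ K) := fun x hx =>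
    (hderiv2 x hx).continuousAt.continuousWithinAt
  have hpos : ∀ κ ∈ Icc κ₀ K, 0 < g' κ := by
    by_contra hcon
    push_neg at hcon
    obtain ⟨τ₀, hτ₀, hτ₀'⟩ := hcon
    set B := {x | x ∈ Icc κ₀ K ∧ g' x ≤ 0} with hB
    have hBne : B.Nonempty := ⟨τ₀, hτ₀, hτ₀'⟩
    have hBbdd : BddBelow B := ⟨κ₀, fun x hx => hx.1.1⟩
    set τ := sInf B with hτ
    have hτcl : τ ∈ closure B := csInf_mem_closure hBne hBbdd
    have hBsub : B ⊆ Icc κ₀ K := fun x hx => hx.1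
    have hτm : τ ∈ Icc κ₀ K :=
      isClosed_Icc.closure_subset ((closure_mono hBsub) hτcl)
    have hτle : g' τ ≤ 0 := by
      have hne : (nhdsWithin τ B).NeBot := mem_closure_iff_nhdsWithin_neBot.mp hτcl
      have ht : Filter.Tendsto g' (nhdsWithin τ B) (nhds (g' τ)) :=
        ((hderiv2 τ hτm).continuousAt).continuousWithinAt.tendsto
      exact le_of_tendsto ht (eventually_nhdsWithin_of_forall fun x hx => hx.2)
    have hκτ : κ₀ < τ := by
      rcases lt_or_eq_of_le hτm.1 with h | h
      · exact h
      · exfalso; rw [← h] at hτle; linarith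
    have hIco : ∀ x ∈ Ico κ₀ τ, 0 < g' x := by
      intro x hx
      by_contra hns
      push_neg at hns
      have : τ ≤ x := csInf_le hBbdd ⟨⟨hx.1, hx.2.le.trans hτm.2⟩, hns⟩
      exact absurd hx.2 (not_lt.mpr this)
    have hIccsub : Icc κ₀ τ ⊆ Icc κ₀ K := Icc_subset_Icc le_rfl hτm.2
    have hmono : StrictMonoOn g (Icc κ₀ τ) := by
      apply strictMonoOn_of_deriv_pos (convex_Icc _ _) (contg.mono hIccsub)
      intro x hx
      rw [interior_Icc] at hx
      rw [(hderiv1 x (hIccsub ⟨hx.1.le, hx.2.le⟩)).deriv]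
      exact hIco x ⟨hx.1.le, hx.2⟩
    have hgmono : ∀ x ∈ Icc κ₀ τ, g κ₀ ≤ g x := fun x hx =>
      hmono.monotoneOn (left_mem_Icc.mpr hκτ.le) hx hx.1
    have hnorm : ∀ x ∈ Icc κ₀ τ, ‖z κ₀‖ ≤ ‖z x‖ := by
      intro x hx
      have h1 := hgmono x hx
      rw [hg κ₀ (hIccsub (left_mem_Icc.mpr hκτ.le)), hg x (hIccsub hx)] at h1
      nlinarith [norm_nonneg (z x), norm_nonneg (z κ₀)]
    have hmono' : StrictMonoOn g' (Icc κ₀ τ) := by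
      apply strictMonoOn_of_deriv_pos (convex_Icc _ _) (contg'.mono hIccsub)
      intro x hx
      rw [interior_Icc] at hx
      have hxm : x ∈ Icc κ₀ τ := ⟨hx.1.le, hx.2.le⟩
      rw [(hderiv2 x (hIccsub hxm)).deriv]
      have := (key x (hIccsub hxm) (hnorm x hxm)).2
      linarith
    have : g' κ₀ < g' τ :=
      hmono' (left_mem_Icc.mpr hκτ.le) (right_mem_Icc.mpr hκτ.le) hκτ
    linarith
  have hmono : StrictMonoOn g (Icc κ₀ K) := by
    apply strictMonoOn_of_deriv_pos (convex_Icc _ _) contg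
    intro x hx
    rw [interior_Icc] at hx
    have hxm : x ∈ Icc κ₀ K := ⟨hx.1.le, hx.2.le⟩
    rw [(hderiv1 x hxm).deriv]
    exact hpos x hxm
  intro κ hκ'
  have h1 : g κ₀ ≤ g κ := hmono.monotoneOn (left_mem_Icc.mpr hκ) hκ' hκ'.1
  have hnorm : ‖z κ₀‖ ≤ ‖z κ‖ := by
    rw [hg κ₀ (left_mem_Icc.mpr hκ), hg κ hκ'] at h1
    nlinarith [norm_nonneg (z κ), norm_nonneg (z κ₀)]
  exact key κ hκ' hnorm
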